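/- Let n ≥ 0 and let X be a separable metrizable space of covering dimension at most n which is LC^{n-1}. If X = ⋃_{i∈ℕ} X_i where each X_i is a strong Z-set in X, then every compact subset of X is a strong Z-set in X. -/
import Mathlib


open Set Topology TopologicalSpace

/-- The cube `[0,1]^k`. -/
abbrev Cube (k : ℕ) : Type := Fin k → unitInterval

/-- The boundary `∂[0,1]^k` of the cube: points with some coordinate equal to `0` or `1`. -/
def cubeBoundary (k : ℕ) : Set (Cube k) := {x | ∃ i, x i = 0 ∨ x i = 1}

/-- The Nöbeling space `N_n^{2n+1}`: the set of points of `ℝ^{2n+1}` having at most `n`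
rational coordinates. -/
def NobelingSpace (n : ℕ) : Set (Fin (2 * n + 1) → ℝ) :=
  {x | Set.ncard {i | ∃ q : ℚ, x i = (q : ℝ)} ≤ n}

/-- `𝒰` is an open cover of `Y`. -/
def IsOpenCover {Y : Type*} [TopologicalSpace Y] (𝒰 : Set (Set Y)) : Prop :=
  (∀ U ∈ 𝒰, IsOpen U) ∧ ⋃₀ 𝒰 = Set.univ

/-- Two maps `f g : Z → Y` are `𝒰`-close. -/
def UClose {Z Y : Type*} (𝒰 : Set (Set Y)) (f g : Z → Y) : Prop :=
  ∀ z, ∃ U ∈ 𝒰, f z ∈ U ∧ g z ∈ U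

/-- `A` is a `Z`-set in `Y` in the `n`-dimensional sense. -/
def IsZSet (n : ℕ) {Y : Type*} [TopologicalSpace Y] (A : Set Y) : Prop :=
  IsClosed A ∧ Dense {f : C(Cube n, Y) | Set.range ⇑f ∩ A = ∅}

/-- A `Z_σ`-set: countable union of `Z`-sets. -/
def IsZSigmaSet (n : ℕ) {Y : Type*} [TopologicalSpace Y] (A : Set Y) : Prop :=
  ∃ F : ℕ → Set Y, (∀ i, IsZSet n (F i)) ∧ A = ⋃ i, F i

/-- A strong `Z`-set. -/
def IsStrongZSet (n : ℕ) {X : Type*} [TopologicalSpace X] (A : Set X) : Prop :=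
  IsClosed A ∧ ∀ 𝒰 : Set (Set X), IsOpenCover 𝒰 →
    ∃ g : C(X, X), UClose 𝒰 ⇑g id ∧ closure (Set.range ⇑g) ∩ A = ∅

/-- The discrete `n`-cells property. -/
def DiscreteNCellsProperty (n : ℕ) (X : Type*) [TopologicalSpace X] : Prop :=
  ∀ f : C(Cube n × ℕ, X), ∀ 𝒰 : Set (Set X), IsOpenCover 𝒰 →
    ∃ g : C(Cube n × ℕ, X), UClose 𝒰 ⇑g ⇑f ∧
      ∀ x : X, ∃ V ∈ nhds x, {k : ℕ | ∃ c : Cube n, g (c, k) ∈ V}.Subsingleton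

/-- `X` is `LC^{n-1}`: local extension of maps on `∂[0,1]^k` for all `k ≤ n`. -/
def IsLCUpTo (n : ℕ) (X : Type*) [TopologicalSpace X] : Prop :=
  ∀ k ≤ n, ∀ x : X, ∀ U ∈ nhds x, ∃ V ∈ nhds x,
    ∀ f : C(cubeBoundary k, X), (∀ z, f z ∈ V) →
      ∃ F : C(Cube k, X), (∀ z, F z ∈ U) ∧ ∀ z : cubeBoundary k, F z = f z

/-- `X` is `C^{n-1}`: maps on `∂[0,1]^k` extend over `[0,1]^k`, for all `k ≤ n`. -/
def IsCUpTo (n : ℕ) (X : Type*) [TopologicalSpace X] : Prop :=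
  ∀ k ≤ n, ∀ f : C(cubeBoundary k, X),
    ∃ F : C(Cube k, X), ∀ z : cubeBoundary k, F z = f z

/-- `X ⊆ M` is `LC^{n-1}` relative to `M`. -/
def IsLCRelUpTo (n : ℕ) {M : Type*} [TopologicalSpace M] (X : Set M) : Prop :=
  ∀ k ≤ n, ∀ x : M, ∀ U ∈ nhds x, ∃ V ∈ nhds x,
    ∀ f : C(cubeBoundary k, M), (∀ z, f z ∈ V ∩ X) →
      ∃ F : C(Cube k, M), (∀ z, F z ∈ U ∩ X) ∧ ∀ z : cubeBoundary k, F z = f z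

/-- Covering dimension `≤ n`. -/
def CovDimLE (X : Type*) [TopologicalSpace X] (n : ℕ) : Prop :=
  ∀ 𝒰 : Set (Set X), 𝒰.Finite → (∀ U ∈ 𝒰, IsOpen U) → ⋃₀ 𝒰 = Set.univ →
    ∃ 𝒱 : Set (Set X), 𝒱.Finite ∧ (∀ V ∈ 𝒱, IsOpen V) ∧ ⋃₀ 𝒱 = Set.univ ∧
      (∀ V ∈ 𝒱, ∃ U ∈ 𝒰, V ⊆ U) ∧
      ∀ x : X, Set.ncard {V | V ∈ 𝒱 ∧ x ∈ V} ≤ n + 1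

/-- Covering dimension equal to `n`: `≤ n` but not `≤ m` for any `m < n`. -/
def CovDimEq (X : Type*) [TopologicalSpace X] (n : ℕ) : Prop :=
  CovDimLE X n ∧ ∀ m : ℕ, m + 1 ≤ n → ¬ CovDimLE X m

/-- `X` is an absolute extensor in dimension `n`. -/
def IsAEn (n : ℕ) (X : Type*) [TopologicalSpace X] : Prop :=
  ∀ (Z : Type) [TopologicalSpace Z] [MetrizableSpace Z], CovDimLE Z n →
    ∀ A : Set Z, IsClosed A → ∀ f : C(A, X),
      ∃ F : C(Z, X), ∀ a : A, F a = f a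

/-- A `Z`-embedding: an embedding whose range is a `Z`-set. -/
def IsZEmbedding (n : ℕ) {C X : Type*} [TopologicalSpace C] [TopologicalSpace X]
    (g : C → X) : Prop :=
  IsEmbedding g ∧ IsZSet n (Set.range g)

/-- `X` is strongly `K`-universal. -/
def StronglyUniversal (n : ℕ) (K : (Z : Type) → TopologicalSpace Z → Prop)
    (X : Type*) [TopologicalSpace X] : Prop :=
  ∀ (C : Type) [tC : TopologicalSpace C], K C tC →
    ∀ f : C(C, X), ∀ D : Set C, IsClosed D →
      IsZEmbedding n (fun d : D => f d) →
      ∀ 𝒰 : Set (Set X), IsOpenCover 𝒰 →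
        ∃ g : C(C, X), IsZEmbedding n ⇑g ∧ (∀ d ∈ D, g d = f d) ∧ UClose 𝒰 ⇑g ⇑f

/-- `X` is a `K`-absorbing set (`X` is `n`-dimensional, an `AE(n)`, a countable union of
strong `Z`-sets, a countable union of subspaces from `K`, and strongly `K`-universal). -/
def IsAbsorbingSet (n : ℕ) (K : (Z : Type) → TopologicalSpace Z → Prop)
    (X : Type) [TopologicalSpace X] : Prop :=
  CovDimEq X n ∧ IsAEn n X ∧
  (∃ A : ℕ → Set X, (∀ i, IsStrongZSet n (A i)) ∧ ⋃ i, A i = Set.univ) ∧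
  (∃ A : ℕ → Set X, (∀ i, K (A i) inferInstance) ∧ ⋃ i, A i = Set.univ) ∧
  StronglyUniversal n K X

/-- `K` is a class of separable metrizable spaces. -/
def IsSepMetrClass (K : (Z : Type) → TopologicalSpace Z → Prop) : Prop :=
  ∀ (Z : Type) (tZ : TopologicalSpace Z), K Z tZ →
    @MetrizableSpace Z tZ ∧ @SeparableSpace Z tZ

/-- `K` is topological: closed under homeomorphisms. -/
def IsTopologicalClass (K : (Z : Type) → TopologicalSpace Z → Prop) : Prop :=
  ∀ (Z₁ : Type) [t₁ : TopologicalSpace Z₁] (Z₂ : Type) [t₂ : TopologicalSpace Z₂],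
    K Z₁ t₁ → Nonempty (Z₁ ≃ₜ Z₂) → K Z₂ t₂

/-- `K` is finitely additive: a space covered by finitely many closed subspaces from `K`
belongs to `K`. -/
def IsFinitelyAdditiveClass (K : (Z : Type) → TopologicalSpace Z → Prop) : Prop :=
  ∀ (Z : Type) [tZ : TopologicalSpace Z] (m : ℕ) (A : Fin m → Set Z),
    (∀ i, IsClosed (A i)) → (⋃ i, A i) = Set.univ →
    (∀ i, K (A i) inferInstance) → K Z tZ

/-- `K` is hereditary with respect to closed subspaces. -/
def IsClosedHereditaryClass (K : (Z : Type) → TopologicalSpace Z → Prop) : Prop :=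
  ∀ (Z : Type) [tZ : TopologicalSpace Z], K Z tZ →
    ∀ A : Set Z, IsClosed A → K (↥A) inferInstance

/-- `B ⊆ Y` is locally `n`-negligible. -/
def LocallyNNegligible (n : ℕ) {Y : Type*} [TopologicalSpace Y] (B : Set Y) : Prop :=
  ∀ U : Set Y, IsOpen U → ∀ k ≤ n,
    Dense {f : C(Cube k, ↥U) | Set.range (fun z => (f z : Y)) ∩ B = ∅}

/-- The Borelian classes of subsets of a space: `Borelian true α` is the additive class
`𝒜_α` and `Borelian false α` is the multiplicative class `ℳ_α`. -/
inductive Borelian {X : Type} [TopologicalSpace X] : Bool → Ordinal.{0} → Set X → Prop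
  | isOpen {s : Set X} (h : IsOpen s) : Borelian true 0 s
  | isClosed {s : Set X} (h : IsClosed s) : Borelian false 0 s
  | iUnion {α : Ordinal} (hα : α ≠ 0) (f : ℕ → Set X) (β : ℕ → Ordinal)
      (hβ : ∀ i, β i < α) (h : ∀ i, Borelian false (β i) (f i)) :
      Borelian true α (⋃ i, f i)
  | iInter {α : Ordinal} (hα : α ≠ 0) (f : ℕ → Set X) (β : ℕ → Ordinal)
      (hβ : ∀ i, β i < α) (h : ∀ i, Borelian true (β i) (f i)) :
      Borelian false α (⋂ i, f i)

/-- `Z` belongs to the absolute additive (`b = true`) resp. multiplicative (`b = false`)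
Borelian class `α`: every embedding into a Polish space has image of class `α`. -/
def InAbsoluteBorelClass (b : Bool) (α : Ordinal) (Z : Type) [tZ : TopologicalSpace Z] :
    Prop :=
  ∀ (P : Type) [TopologicalSpace P] [PolishSpace P], ∀ e : Z → P,
    IsEmbedding e → Borelian b α (Set.range e)

/-- The class `ℳ_α(n)` (`b = false`) resp. `𝒜_α(n)` (`b = true`): separable metrizable
spaces of covering dimension `≤ n` in the corresponding absolute Borelian class. -/
def BorelClassDim (b : Bool) (α : Ordinal) (n : ℕ) :
    (Z : Type) → TopologicalSpace Z → Prop :=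
  fun Z tZ => @MetrizableSpace Z tZ ∧ @SeparableSpace Z tZ ∧
    @InAbsoluteBorelClass b α Z tZ ∧ @CovDimLE Z tZ n

namespace SZAux

variable {X : Type} [MetricSpace X]

noncomputable def rad (𝒰 : Set (Set X)) (x : X) : ℝ :=
  sSup {r : ℝ | 0 < r ∧ r ≤ 1 ∧ ∃ U ∈ 𝒰, Metric.ball x r ⊆ U}

variable {𝒰 : Set (Set X)}

theorem radSet_nonempty (hU : IsOpenCover 𝒰) (x : X) :
    {r : ℝ | 0 < r ∧ r ≤ 1 ∧ ∃ U ∈ 𝒰, Metric.ball x r ⊆ U}.Nonempty := by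
  have hx : x ∈ ⋃₀ 𝒰 := by rw [hU.2]; trivial
  obtain ⟨U, hUm, hxU⟩ := hx
  obtain ⟨ε, hε, hball⟩ := Metric.isOpen_iff.1 (hU.1 U hUm) x hxU
  exact ⟨min ε 1, lt_min hε one_pos, min_le_right _ _, U, hUm,
    (Metric.ball_subset_ball (min_le_left _ _)).trans hball⟩

theorem radSet_bdd (x : X) :
    BddAbove {r : ℝ | 0 < r ∧ r ≤ 1 ∧ ∃ U ∈ 𝒰, Metric.ball x r ⊆ U} :=
  ⟨1, fun _ hr => hr.2.1⟩

theorem rad_pos (hU : IsOpenCover 𝒰) (x : X) : 0 < rad 𝒰 x := by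
  obtain ⟨r, hr⟩ := radSet_nonempty hU x
  exact lt_of_lt_of_le hr.1 (le_csSup (radSet_bdd x) hr)

theorem rad_le_one (hU : IsOpenCover 𝒰) (x : X) : rad 𝒰 x ≤ 1 :=
  csSup_le (radSet_nonempty hU x) fun _ hr => hr.2.1

theorem rad_lip (hU : IsOpenCover 𝒰) (x y : X) : rad 𝒰 x ≤ rad 𝒰 y + dist x y := by
  apply csSup_le (radSet_nonempty hU x)
  intro r hr
  rcases le_or_gt r (dist x y) with h | h
  · have := rad_pos hU y; linarith
  · obtain ⟨hr0, hr1, U, hUm, hb⟩ := hr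
    have hmem : r - dist x y ∈ {r : ℝ | 0 < r ∧ r ≤ 1 ∧ ∃ U ∈ 𝒰, Metric.ball y r ⊆ U} := by
      refine ⟨by linarith, by linarith [dist_nonneg (x := x) (y := y)], U, hUm,
        fun z hz => hb ?_⟩
      rw [Metric.mem_ball] at hz ⊢
      have h1 := dist_triangle z y x
      have h2 : dist y x = dist x y := dist_comm _ _
      linarith
    have := le_csSup (radSet_bdd y) hmem
    have h3 : rad 𝒰 y = sSup _ := rfl
    linarith [this]

theorem rad_key (hU : IsOpenCover 𝒰) (x y : X) (h : dist y x < rad 𝒰 x) :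
    ∃ U ∈ 𝒰, x ∈ U ∧ y ∈ U := by
  obtain ⟨r, hrS, hr⟩ := exists_lt_of_lt_csSup (radSet_nonempty hU x) h
  obtain ⟨hr0, _, U, hUm, hb⟩ := hrS
  exact ⟨U, hUm, hb (Metric.mem_ball_self hr0), hb (by rwa [Metric.mem_ball])⟩

theorem stageA {n : ℕ} (hU : IsOpenCover 𝒰)
    {B : Set X} (hB : IsStrongZSet n B) {K : Set X} (hK : IsCompact K)
    (c : ℝ) :
    ∃ (h : C(X, X)) (e : ℝ), 0 < c → c ≤ 1 →
      (0 < e ∧ (∀ z, dist (h z) z ≤ c * rad 𝒰 z) ∧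
        Metric.thickening (2 * e) (K ∩ B) ⊆ (closure (Set.range ⇑h))ᶜ) := by
  by_cases hc : 0 < c ∧ c ≤ 1
  · obtain ⟨hc1, hc2⟩ := hc
    have hVcover : IsOpenCover (Set.range (fun y => Metric.ball y (c / 4 * rad 𝒰 y))) := by
      constructor
      · rintro V ⟨y, rfl⟩; exact Metric.isOpen_ball
      · rw [Set.eq_univ_iff_forall]
        intro x
        exact ⟨Metric.ball x (c / 4 * rad 𝒰 x), ⟨x, rfl⟩,
          Metric.mem_ball_self (mul_pos (by linarith) (rad_pos hU x))⟩
    obtain ⟨h, hcl, hmiss⟩ := hB.2 _ hVcover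
    have hsub : K ∩ B ⊆ (closure (Set.range ⇑h))ᶜ := by
      intro p hp hmem
      exact Set.eq_empty_iff_forall_notMem.1 hmiss p ⟨hmem, hp.2⟩
    obtain ⟨δ, hδpos, hδ⟩ := (hK.inter_right hB.1).exists_thickening_subset_open
      isClosed_closure.isOpen_compl hsub
    refine ⟨h, δ / 2, fun _ _ => ⟨by linarith, ?_, ?_⟩⟩
    · intro z
      obtain ⟨V, hV, hhz, hz⟩ := hcl z
      obtain ⟨y, rfl⟩ := hV
      rw [Metric.mem_ball] at hhz hz
      have hz' : dist z y < c / 4 * rad 𝒰 y := hz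
      have h1 : dist (h z) z ≤ dist (h z) y + dist y z := dist_triangle _ _ _
      have h2 : dist y z = dist z y := dist_comm _ _
      have h3 : rad 𝒰 y ≤ rad 𝒰 z + dist y z := rad_lip hU y z
      have hρy : 0 < rad 𝒰 y := rad_pos hU y
      have hρz : 0 < rad 𝒰 z := rad_pos hU z
      have h5 : dist (h z) z ≤ c / 2 * rad 𝒰 y := by linarith
      have h6 : 3 / 4 * rad 𝒰 y ≤ rad 𝒰 z := by
        nlinarith [mul_nonneg (sub_nonneg.2 hc2) hρy.le]
      nlinarith [mul_le_mul_of_nonneg_left h6 hc1.le]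
    · rw [show 2 * (δ / 2) = δ by ring]
      exact hδ
  · exact ⟨ContinuousMap.id X, 1, fun h1 h2 => absurd ⟨h1, h2⟩ hc⟩

theorem main {n : ℕ} (A : ℕ → Set X)
    (hcov : (⋃ i, A i) = Set.univ) (hZ : ∀ i, IsStrongZSet n (A i))
    {K : Set X} (hK : IsCompact K) (hU : IsOpenCover 𝒰) :
    ∃ g : C(X, X), UClose 𝒰 ⇑g id ∧ closure (Set.range ⇑g) ∩ K = ∅ := by
  classical
  choose hF eF spec using fun (i : ℕ) (c : ℝ) => stageA hU (hZ i) hK c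
  obtain ⟨c, hc0, hcs⟩ : ∃ c : ℕ → ℝ, c 0 = 1 / 8 ∧
      ∀ i, c (i + 1) = 1 / 8 * min (c i) (min (eF i (c i)) 1) :=
    ⟨fun m => Nat.rec ((1 : ℝ) / 8) (fun i ci => 1 / 8 * min ci (min (eF i ci) 1)) m,
      rfl, fun _ => rfl⟩
  have hcval : ∀ i, 0 < c i ∧ c i ≤ 1 := by
    intro i
    induction i with
    | zero => rw [hc0]; norm_num
    | succ i ih =>
      have he := (spec i (c i) ih.1 ih.2).1
      rw [hcs]
      constructor
      · have := lt_min ih.1 (lt_min he one_pos); linarith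
      · have h1 : min (c i) (min (eF i (c i)) 1) ≤ c i := min_le_left _ _
        linarith [ih.1, ih.2]
  have hspec := fun i => spec i (c i) (hcval i).1 (hcval i).2
  have hchalf : ∀ i, c (i + 1) ≤ c i / 2 := by
    intro i; rw [hcs]
    have h1 : min (c i) (min (eF i (c i)) 1) ≤ c i := min_le_left _ _
    linarith [(hcval i).1]
  have hce : ∀ i, c (i + 1) ≤ eF i (c i) / 8 := by
    intro i; rw [hcs]
    have h1 : min (c i) (min (eF i (c i)) 1) ≤ eF i (c i) :=
      le_trans (min_le_right _ _) (min_le_left _ _)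
    linarith
  have hcgeom : ∀ a t, c (a + t) ≤ (1 / 2) ^ t * c a := by
    intro a t
    induction t with
    | zero => simp
    | succ t ih =>
      have h1 := hchalf (a + t)
      have h2 : a + (t + 1) = (a + t) + 1 := rfl
      rw [h2, pow_succ]
      linarith
  have hcpow : ∀ i, c i ≤ (1 / 2) ^ i * (1 / 8) := by
    intro i
    have := hcgeom 0 i
    simpa [hc0] using this
  obtain ⟨g, hg0, hgs⟩ : ∃ g : ℕ → C(X, X), g 0 = ContinuousMap.id X ∧
      ∀ i, g (i + 1) = (hF i (c i)).comp (g i) :=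
    ⟨fun m => Nat.rec (ContinuousMap.id X) (fun i gi => (hF i (c i)).comp gi) m,
      rfl, fun _ => rfl⟩
  have hmove : ∀ i z, dist (g (i + 1) z) (g i z) ≤ c i * rad 𝒰 (g i z) := by
    intro i z
    rw [hgs]
    exact (hspec i).2.1 (g i z)
  have htot : ∀ x m, dist (g m x) x ≤ 1 / 2 * (1 - (1 / 2) ^ m) * rad 𝒰 x := by
    intro x m
    induction m with
    | zero =>
      rw [hg0]
      norm_num
    | succ m ih =>
      have h1 : dist (g (m + 1) x) x ≤ dist (g (m + 1) x) (g m x) + dist (g m x) x :=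
        dist_triangle _ _ _
      have h2 := hmove m x
      have h3 : rad 𝒰 (g m x) ≤ rad 𝒰 x + dist (g m x) x := rad_lip hU _ _
      have h4 := hcpow m
      have hρx := rad_pos hU x
      have hq : (0:ℝ) < (1 / 2) ^ m := by positivity
      have hq1 : ((1:ℝ) / 2) ^ m ≤ 1 := by
        apply pow_le_one₀ <;> norm_num
      have hD : dist (g m x) x ≤ 1 / 2 * rad 𝒰 x := by nlinarith
      have hstep : dist (g (m + 1) x) (g m x) ≤ 1 / 4 * (1 / 2) ^ m * rad 𝒰 x := by
        have hc1 := (hcval m).1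
        nlinarith [mul_le_mul_of_nonneg_left h3 hc1.le,
          mul_le_mul_of_nonneg_right h4 (by positivity : (0:ℝ) ≤ rad 𝒰 x)]
      rw [pow_succ]
      nlinarith
  have hUClose : ∀ m, UClose 𝒰 ⇑(g m) id := by
    intro m z
    have h1 := htot z m
    have hρz := rad_pos hU z
    have hq : (0:ℝ) ≤ (1 / 2) ^ m := by positivity
    have hlt : dist (g m z) z < rad 𝒰 z := by nlinarith
    obtain ⟨U, hUm, hz, hgz⟩ := rad_key hU z (g m z) hlt
    exact ⟨U, hUm, hgz, hz⟩
  have hclear : ∀ l x p, p ∈ K ∩ A l → 2 * eF l (c l) ≤ dist (g (l + 1) x) p := by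
    intro l x p hp
    by_contra hlt
    push_neg at hlt
    have hmem : g (l + 1) x ∈ Metric.thickening (2 * eF l (c l)) (K ∩ A l) :=
      Metric.mem_thickening_iff.2 ⟨p, hp, hlt⟩
    refine (hspec l).2.2 hmem (subset_closure ?_)
    rw [hgs]
    exact ⟨g l x, rfl⟩
  have hmaint : ∀ l x p t, p ∈ K ∩ A l →
      2 * eF l (c l) - 4 * (1 - (1 / 2) ^ t) * c (l + 1) ≤ dist (g (l + 1 + t) x) p := by
    intro l x p t hp
    induction t with
    | zero =>
      have := hclear l x p hp
      norm_num
      linarith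
    | succ t ih =>
      have hstep : dist (g (l + 1 + t + 1) x) (g (l + 1 + t) x)
          ≤ c (l + 1 + t) * rad 𝒰 (g (l + 1 + t) x) := hmove _ x
      have hρle : rad 𝒰 (g (l + 1 + t) x) ≤ 1 := rad_le_one hU _
      have hρpos' : 0 < rad 𝒰 (g (l + 1 + t) x) := rad_pos hU _
      have hcg : c (l + 1 + t) ≤ (1 / 2) ^ t * c (l + 1) := hcgeom (l + 1) t
      have hcnn := (hcval (l + 1 + t)).1
      have hstep' : dist (g (l + 1 + t + 1) x) (g (l + 1 + t) x) ≤ (1 / 2) ^ t * c (l + 1) := by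
        nlinarith
      have htri : dist (g (l + 1 + t) x) p ≤ dist (g (l + 1 + t) x) (g (l + 1 + t + 1) x)
          + dist (g (l + 1 + t + 1) x) p := dist_triangle _ _ _
      have hsymm : dist (g (l + 1 + t) x) (g (l + 1 + t + 1) x)
          = dist (g (l + 1 + t + 1) x) (g (l + 1 + t) x) := dist_comm _ _
      have h2 : l + 1 + (t + 1) = l + 1 + t + 1 := rfl
      rw [h2, pow_succ]
      have hC := (hcval (l + 1)).1
      have hq : (0:ℝ) ≤ (1 / 2) ^ t := by positivity
      nlinarith [mul_nonneg hq hC.le]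
  have hfar : ∀ l m x p, l < m → p ∈ K ∩ A l → eF l (c l) ≤ dist (g m x) p := by
    intro l m x p hlm hp
    obtain ⟨t, rfl⟩ : ∃ t, m = l + 1 + t := ⟨m - (l + 1), by omega⟩
    have h1 := hmaint l x p t hp
    have h2 := hce l
    have h3 := (hspec l).1
    have hC := (hcval (l + 1)).1
    have hq : (0:ℝ) ≤ (1 / 2) ^ t := by positivity
    have hq1 : ((1:ℝ) / 2) ^ t ≤ 1 := by apply pow_le_one₀ <;> norm_num
    nlinarith [mul_nonneg hq hC.le]
  have hKsub : K ⊆ ⋃ l, Metric.thickening (eF l (c l)) (K ∩ A l) := by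
    intro k hk
    have hk2 : k ∈ ⋃ i, A i := by rw [hcov]; trivial
    obtain ⟨i, hi⟩ := Set.mem_iUnion.1 hk2
    exact Set.mem_iUnion.2 ⟨i, Metric.self_subset_thickening (hspec i).1 _ ⟨hk, hi⟩⟩
  obtain ⟨t, ht⟩ := hK.elim_finite_subcover _ (fun l => Metric.isOpen_thickening) hKsub
  refine ⟨g (t.sup id + 1), hUClose _, ?_⟩
  rw [Set.eq_empty_iff_forall_notMem]
  rintro q ⟨hq1, hq2⟩
  obtain ⟨l, hlt, hql⟩ := Set.mem_iUnion₂.1 (ht hq2)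
  have hlm : l < t.sup id + 1 := Nat.lt_succ_of_le (Finset.le_sup (f := id) hlt)
  obtain ⟨y, hyW, x, rfl⟩ := mem_closure_iff.1 hq1 _ Metric.isOpen_thickening hql
  obtain ⟨p, hp, hdp⟩ := Metric.mem_thickening_iff.1 hyW
  exact absurd hdp (not_lt.2 (hfar l _ x p hlm hp))

end SZAux

theorem statement8 (n : ℕ) (X : Type) [TopologicalSpace X] [MetrizableSpace X]
    [SeparableSpace X] (hdim : CovDimLE X n) (hLC : IsLCUpTo n X)
    (A : ℕ → Set X) (hcov : (⋃ i, A i) = Set.univ) (hZ : ∀ i, IsStrongZSet n (A i))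
    (K : Set X) (hK : IsCompact K) : IsStrongZSet n K := by
  letI : MetricSpace X := TopologicalSpace.metrizableSpaceMetric X
  exact ⟨hK.isClosed, fun 𝒰 hU => SZAux.main A hcov hZ hK hU⟩
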